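/- With the setup of Φ[a,b,c,d], for every α ∈ ℂ with α ≠ 0 and α ≠ 1, the matrix Φ(P_α) is positive semidefinite of rank exactly 3. -/

import Mathlib

open ComplexOrder
set_option maxHeartbeats 2000000

/-- For `α ≠ 0, 1`, the matrix `Φ(P_α)` is positive semidefinite of rank exactly 3. -/
theorem PhiPalpha_posSemidef_rank_three (a b c d e f g h k : ℝ)
    (ha : 0 < a) (hb : 0 < b) (hc : 0 < c) (hd : 0 < d) (hab : 1 < a * b)
    (hg : g = Real.sqrt (a * c * d))
    (he : e = a * (c + d) * c / (a * b - 1))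
    (hf : f = a * (c + d) * d / (a * b - 1))
    (hh : h = b * e - c ^ 2) (hk : k = b * f - d ^ 2)
    (α : ℂ) (hα0 : α ≠ 0) (hα1 : α ≠ 1) :
    Matrix.PosSemidef
      !![(h : ℂ) - (c : ℂ) * (d : ℂ) * (α + starRingEnd ℂ α) +
           (k : ℂ) * (‖α‖ : ℂ) ^ 2, -(g : ℂ) + (g : ℂ) * α, 0, 0;
         -(g : ℂ) + (g : ℂ) * starRingEnd ℂ α, (a : ℂ), starRingEnd ℂ α, 0;
         0, α, (b : ℂ) * (‖α‖ : ℂ) ^ 2,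
           -(c : ℂ) * starRingEnd ℂ α - (d : ℂ) * (‖α‖ : ℂ) ^ 2;
         0, 0, -(c : ℂ) * α - (d : ℂ) * (‖α‖ : ℂ) ^ 2,
           (e : ℂ) + (f : ℂ) * (‖α‖ : ℂ) ^ 2] ∧
    Matrix.rank
      !![(h : ℂ) - (c : ℂ) * (d : ℂ) * (α + starRingEnd ℂ α) +
           (k : ℂ) * (‖α‖ : ℂ) ^ 2, -(g : ℂ) + (g : ℂ) * α, 0, 0;
         -(g : ℂ) + (g : ℂ) * starRingEnd ℂ α, (a : ℂ), starRingEnd ℂ α, 0;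
         0, α, (b : ℂ) * (‖α‖ : ℂ) ^ 2,
           -(c : ℂ) * starRingEnd ℂ α - (d : ℂ) * (‖α‖ : ℂ) ^ 2;
         0, 0, -(c : ℂ) * α - (d : ℂ) * (‖α‖ : ℂ) ^ 2,
           (e : ℂ) + (f : ℂ) * (‖α‖ : ℂ) ^ 2] = 3 := by
  have hab1 : (0:ℝ) < a * b - 1 := by linarith
  have he0 : 0 < e := by rw [he]; exact div_pos (by positivity) hab1
  have hf0 : 0 < f := by rw [hf]; exact div_pos (by positivity) hab1
  have ht0 : 0 < Complex.normSq α := Complex.normSq_pos.mpr hα0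
  -- positivity of Ar
  have hAr0 : (0:ℝ) < h - 2*c*d*α.re + k*(Complex.normSq α) := by
    have hns : Complex.normSq α = α.re^2 + α.im^2 := by rw [Complex.normSq_apply]; ring
    rw [hh, hk, he, hf, hns]
    set x := α.re; set y := α.im
    have key : (a*b-1) * (b * (a * (c + d) * c / (a * b - 1)) - c ^ 2 - 2*c*d*x
        + (b * (a * (c + d) * d / (a * b - 1)) - d ^ 2)*(x^2+y^2))
        = c*(a*b*d+c) + d*(a*b*c+d)*(x^2+y^2) - 2*(a*b-1)*c*d*x := by
      field_simp; ring
    have hpos : (0:ℝ) < d*(a*b*c+d) := by positivity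
    have hid : d*(a*b*c+d) * (c*(a*b*d+c) + d*(a*b*c+d)*(x^2+y^2) - 2*(a*b-1)*c*d*x)
        = (d*(a*b*c+d)*x - (a*b-1)*c*d)^2 + (d*(a*b*c+d)*y)^2 + a*b*c*d*(c+d)^2 := by ring
    have h3 : (0:ℝ) < a*b*c*d*(c+d)^2 := by positivity
    have hR : (0:ℝ) < c*(a*b*d+c) + d*(a*b*c+d)*(x^2+y^2) - 2*(a*b-1)*c*d*x := by
      nlinarith [hid, hpos, sq_nonneg (d*(a*b*c+d)*x - (a*b-1)*c*d), sq_nonneg (d*(a*b*c+d)*y), h3]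
    nlinarith [key, hR, hab1]
  obtain ⟨Ar, hArdef⟩ : ∃ A : ℝ, A = h - 2*c*d*α.re + k*(Complex.normSq α) := ⟨_, rfl⟩
  rw [← hArdef] at hAr0
  obtain ⟨Er, hErdef⟩ : ∃ E : ℝ, E = e + f*(Complex.normSq α) := ⟨_, rfl⟩
  have hEr0 : (0:ℝ) < Er := hErdef ▸ add_pos he0 (mul_pos hf0 ht0)
  obtain ⟨β, hβdef⟩ : ∃ B : ℂ, B = (starRingEnd ℂ) α := ⟨_, rfl⟩
  have hβ0 : β ≠ 0 := by
    simp only [hβdef, ne_eq, map_eq_zero]; exact hα0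
  have hβ1 : β ≠ 1 := by
    intro H; apply hα1
    have := congrArg (starRingEnd ℂ) H
    rw [hβdef] at H
    simpa [hβdef] using this
  have hconjβ : (starRingEnd ℂ) β = α := by rw [hβdef]; exact Complex.conj_conj α
  have habs : ((‖α‖ : ℝ):ℂ)^2 = α * β := by
    rw [← Complex.ofReal_pow, Complex.sq_norm, hβdef]; exact (Complex.mul_conj α).symm
  have hAc : ((Ar:ℝ):ℂ) = (h:ℂ) - c*d*(α+β) + k*(α*β) := by
    rw [hArdef, hβdef]
    rw [show α + (starRingEnd ℂ) α = ((2*α.re : ℝ):ℂ) from Complex.add_conj α,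
        show α * (starRingEnd ℂ) α = ((Complex.normSq α : ℝ):ℂ) from Complex.mul_conj α]
    push_cast; ring
  have hEc : ((Er:ℝ):ℂ) = (e:ℂ) + f*(α*β) := by
    rw [hErdef, hβdef,
        show α * (starRingEnd ℂ) α = ((Complex.normSq α : ℝ):ℂ) from Complex.mul_conj α]
    push_cast; ring
  have hA0 : ((Ar:ℝ):ℂ) ≠ 0 := Complex.ofReal_ne_zero.mpr hAr0.ne'
  have hE0 : ((Er:ℝ):ℂ) ≠ 0 := Complex.ofReal_ne_zero.mpr hEr0.ne'
  have habC : ((a:ℂ)*b - 1) ≠ 0 := by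
    have : ((a*b - 1 : ℝ):ℂ) ≠ 0 := Complex.ofReal_ne_zero.mpr hab1.ne'
    push_cast at this; exact this
  have hhC : (h:ℂ) = (b:ℂ)*e - (c:ℂ)^2 := by rw [hh]; push_cast; ring
  have hkC : (k:ℂ) = (b:ℂ)*f - (d:ℂ)^2 := by rw [hk]; push_cast; ring
  have heC : (e:ℂ)*((a:ℂ)*b - 1) = (a:ℂ)*((c:ℂ)+d)*c := by
    rw [he]; push_cast; field_simp
  have hfC : (f:ℂ)*((a:ℂ)*b - 1) = (a:ℂ)*((c:ℂ)+d)*d := by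
    rw [hf]; push_cast; field_simp
  have hgC : (g:ℂ)^2 = (a:ℂ)*c*d := by
    rw [hg]; rw [← Complex.ofReal_pow, Real.sq_sqrt (by positivity : (0:ℝ) ≤ a*c*d)]
    push_cast; ring
  -- key scalar identities
  have F4 : (a:ℂ) * ((Ar:ℝ):ℂ) = (g:ℂ)^2*(α-1)*(β-1) + ((Er:ℝ):ℂ) := by
    rw [hAc, hEc, hhC, hkC, hgC]
    linear_combination heC + (α*β)*hfC
  have F5 : (b:ℂ) * ((Er:ℝ):ℂ) = ((Ar:ℝ):ℂ) + ((c:ℂ)+d*α)*((c:ℂ)+d*β) := by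
    rw [hAc, hEc, hhC, hkC]; ring
  -- the factorization
  set C : Matrix (Fin 3) (Fin 4) ℂ :=
    !![((Ar:ℝ):ℂ), (g:ℂ)*(α-1), 0, 0;
       0, ((Er:ℝ):ℂ), ((Ar:ℝ):ℂ)*β, 0;
       0, 0, -α*((c:ℂ)+d*β), ((Er:ℝ):ℂ)] with hCdef
  set D : Matrix (Fin 3) (Fin 3) ℂ :=
    Matrix.diagonal ![((Ar⁻¹:ℝ):ℂ), (((Ar*Er)⁻¹:ℝ):ℂ), ((Er⁻¹:ℝ):ℂ)] with hDdef
  have hDpsd : D.PosSemidef := by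
    rw [hDdef]
    refine Matrix.posSemidef_diagonal_iff.mpr fun i => ?_
    fin_cases i
    · exact Complex.zero_le_real.mpr (by positivity)
    · exact Complex.zero_le_real.mpr (by positivity)
    · exact Complex.zero_le_real.mpr (by positivity)
  rw [habs, show (starRingEnd ℂ) α = β from hβdef.symm]
  set M : Matrix (Fin 4) (Fin 4) ℂ :=
    !![(h : ℂ) - (c : ℂ) * (d : ℂ) * (α + β) + (k : ℂ) * (α*β), -(g : ℂ) + (g : ℂ) * α, 0, 0;
       -(g : ℂ) + (g : ℂ) * β, (a : ℂ), β, 0;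
       0, α, (b : ℂ) * (α*β), -(c : ℂ) * β - (d : ℂ) * (α*β);
       0, 0, -(c : ℂ) * α - (d : ℂ) * (α*β), (e : ℂ) + (f : ℂ) * (α*β)] with hMdef
  have key : M = C.conjTranspose * D * C := by
    rw [hMdef, hCdef, hDdef]
    ext i j
    fin_cases i <;> fin_cases j <;>
      simp [Matrix.mul_apply, Matrix.conjTranspose_apply, Fin.sum_univ_three,
        Matrix.diagonal, Complex.conj_ofReal, map_mul, map_sub, map_add,
        Matrix.vecHead, Matrix.vecTail, hconjβ, ← hβdef] <;>
      push_cast <;> (try ring)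
    · linear_combination -hAc
    · field_simp
      all_goals ring
    · field_simp
      all_goals ring
    · first
        | linear_combination (norm := (field_simp [hA0, hE0]; ring1)) ((↑Ar:ℂ))⁻¹ * F4
        | linear_combination ((↑Ar:ℂ))⁻¹ * F4
    · field_simp
      all_goals ring
    · field_simp
      all_goals ring
    · first
        | linear_combination (norm := (field_simp [hA0, hE0]; ring1)) (α*β*((↑Er:ℂ))⁻¹)*F5
        | linear_combination (α*β*((↑Er:ℂ))⁻¹)*F5
    · field_simp
      all_goals ring
    · field_simp
      all_goals ring
    · linear_combination -hEc
  constructor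
  · rw [key]; exact hDpsd.conjTranspose_mul_mul_same C
  · -- rank
    -- upper bound
    have hle : M.rank ≤ 3 := by
      rw [key]
      calc (C.conjTranspose * D * C).rank ≤ (C.conjTranspose * D).rank :=
            Matrix.rank_mul_le_left _ _
        _ ≤ C.conjTranspose.rank := Matrix.rank_mul_le_left _ _
        _ = C.rank := Matrix.rank_conjTranspose _
        _ ≤ 3 := by simpa using C.rank_le_card_height
    -- lower bound via 3x3 submatrix
    obtain ⟨S, hSdef⟩ : ∃ S : Matrix (Fin 3) (Fin 3) ℂ,
        S = !![(a:ℂ), β, 0;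
               α, (b:ℂ)*(α*β), -(c:ℂ)*β - (d:ℂ)*(α*β);
               0, -(c:ℂ)*α - (d:ℂ)*(α*β), (e:ℂ) + (f:ℂ)*(α*β)] := ⟨_, rfl⟩
    obtain ⟨P, hPdef⟩ : ∃ P : Matrix (Fin 3) (Fin 4) ℂ,
        P = !![0,1,0,0; 0,0,1,0; 0,0,0,1] := ⟨_, rfl⟩
    obtain ⟨Q, hQdef⟩ : ∃ Q : Matrix (Fin 4) (Fin 3) ℂ,
        Q = !![0,0,0; 1,0,0; 0,1,0; 0,0,1] := ⟨_, rfl⟩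
    have hPMQ : P * M * Q = S := by
      rw [hPdef, hQdef, hSdef, hMdef]
      ext i j
      fin_cases i <;> fin_cases j <;>
        simp [Matrix.mul_apply, Fin.sum_univ_four, Fin.sum_univ_three,
          Matrix.vecHead, Matrix.vecTail]
    have hdetS : S.det = (a:ℂ)*c*d*(α*β)*((1-α)*(1-β)) := by
      rw [hSdef, Matrix.det_fin_three]
      simp [Matrix.vecHead, Matrix.vecTail]
      linear_combination (α*β)*heC + (α*β)*(α*β)*hfC
    have hdet0 : S.det ≠ 0 := by
      rw [hdetS]
      have h1α : (1:ℂ) - α ≠ 0 := sub_ne_zero.mpr (Ne.symm hα1)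
      have h1β : (1:ℂ) - β ≠ 0 := sub_ne_zero.mpr (Ne.symm hβ1)
      have haC : (a:ℂ) ≠ 0 := Complex.ofReal_ne_zero.mpr ha.ne'
      have hcC : (c:ℂ) ≠ 0 := Complex.ofReal_ne_zero.mpr hc.ne'
      have hdC : (d:ℂ) ≠ 0 := Complex.ofReal_ne_zero.mpr hd.ne'
      exact mul_ne_zero (mul_ne_zero (mul_ne_zero (mul_ne_zero haC hcC) hdC)
        (mul_ne_zero hα0 hβ0)) (mul_ne_zero h1α h1β)
    have hrankS : S.rank = 3 := by
      have := Matrix.rank_of_isUnit S ((Matrix.isUnit_iff_isUnit_det S).mpr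
        (isUnit_iff_ne_zero.mpr hdet0))
      simpa using this
    have hge : 3 ≤ M.rank := by
      calc (3:ℕ) = S.rank := hrankS.symm
        _ = (P * M * Q).rank := by rw [hPMQ]
        _ ≤ (P * M).rank := Matrix.rank_mul_le_left _ _
        _ ≤ M.rank := Matrix.rank_mul_le_right _ _
    omega
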